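/- Let G be a finite isolate-free simple graph and let U be a semi-total dominating set of G. Let X = {u ∈ U : u is adjacent to at least one other vertex of U} (the allied vertices) and Y = U \ X (the free vertices). Then there exists a partition {π_u : u ∈ U} of V(G) indexed by U such that: (i) for every u ∈ X, π_u is contained in the open neighborhood N(u); (ii) for every u ∈ Y, π_u is contained in the closed neighborhood N[u]; and (iii) for every u ∈ X and w ∈ Y with d(u, w) = 2, no common neighbor of u and w lies in π_w, i.e., N(u) ∩ N(w) ∩ π_w = ∅. -/

import Mathlib

open SimpleGraph

/-- `S` is a semi-total dominating set of `G`: every vertex lies in the closed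
neighborhood of `S`, and every vertex of `S` is within distance at most 2 of
another vertex of `S`. -/
def IsSemitotalDomSet {V : Type*} (G : SimpleGraph V) (S : Set V) : Prop :=
  (∀ v : V, v ∈ S ∨ ∃ u ∈ S, G.Adj u v) ∧
  (∀ u ∈ S, ∃ w ∈ S, w ≠ u ∧ (G.Adj u w ∨ ∃ z, G.Adj u z ∧ G.Adj z w))

/-- `u` is an allied vertex of `U` in `G`: it is adjacent to at least one
other vertex of `U`. -/
def Allied {V : Type*} (G : SimpleGraph V) (U : Set V) (u : V) : Prop :=
  ∃ w ∈ U, w ≠ u ∧ G.Adj u w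

/-- `u` and `w` are at distance exactly 2 in `G`: distinct, nonadjacent,
with a common neighbor. -/
def DistEqTwo {V : Type*} (G : SimpleGraph V) (u w : V) : Prop :=
  u ≠ w ∧ ¬G.Adj u w ∧ ∃ z : V, G.Adj u z ∧ G.Adj z w

theorem exists_partition_of_semitotalDomSet
    {V : Type*} [Fintype V] (G : SimpleGraph V)
    (hG : ∀ v : V, ∃ u : V, G.Adj v u)
    (U : Set V) (hU : IsSemitotalDomSet G U) :
    ∃ π : V → Set V,
      -- the parts are pairwise disjoint
      (∀ u ∈ U, ∀ w ∈ U, u ≠ w → Disjoint (π u) (π w)) ∧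
      -- the parts cover all of `V(G)`
      (⋃ u ∈ U, π u) = Set.univ ∧
      -- (i) the part of an allied vertex lies in its open neighborhood
      (∀ u ∈ U, Allied G U u → π u ⊆ G.neighborSet u) ∧
      -- (ii) the part of a free vertex lies in its closed neighborhood
      (∀ u ∈ U, ¬Allied G U u → π u ⊆ insert u (G.neighborSet u)) ∧
      -- (iii) for allied `u` and free `w` at distance 2, no common neighbor
      -- of `u` and `w` lies in `π w`
      (∀ u ∈ U, ∀ w ∈ U, Allied G U u → ¬Allied G U w → DistEqTwo G u w →
        G.neighborSet u ∩ G.neighborSet w ∩ π w = ∅) := by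
  classical
  have hassign : ∀ v : V, ∃ u : V, u ∈ U ∧
      ((Allied G U u ∧ G.Adj u v) ∨ (¬Allied G U u ∧ u = v) ∨
       (¬Allied G U u ∧ G.Adj u v ∧ ∀ x ∈ U, Allied G U x → ¬G.Adj x v)) := by
    intro v
    by_cases hv : v ∈ U
    · by_cases ha : Allied G U v
      · obtain ⟨w, hwU, hwv, hadj⟩ := ha
        exact ⟨w, hwU, Or.inl ⟨⟨v, hv, hwv.symm, hadj.symm⟩, hadj.symm⟩⟩
      · exact ⟨v, hv, Or.inr (Or.inl ⟨ha, rfl⟩)⟩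
    · by_cases hx : ∃ x ∈ U, Allied G U x ∧ G.Adj x v
      · obtain ⟨x, hxU, hxa, hxv⟩ := hx
        exact ⟨x, hxU, Or.inl ⟨hxa, hxv⟩⟩
      · obtain ⟨u, huU, huv⟩ := (hU.1 v).resolve_left hv
        push_neg at hx
        refine ⟨u, huU, Or.inr (Or.inr ⟨fun hua => hx u huU hua huv, huv,
          fun x hxU hxa hxv => hx x hxU hxa hxv⟩)⟩
  choose f hfU hfspec using hassign
  refine ⟨fun u => {v | f v = u}, ?_, ?_, ?_, ?_, ?_⟩
  · intro u _ w _ huw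
    exact Set.disjoint_left.mpr fun v hvu hvw => huw (hvu.symm.trans hvw)
  · ext v
    simp only [Set.mem_iUnion, Set.mem_univ, iff_true]
    exact ⟨f v, hfU v, rfl⟩
  · intro u _ hua v hv
    have := hfspec v
    rw [Set.mem_setOf_eq] at hv
    rw [hv] at this
    rcases this with ⟨_, h⟩ | ⟨h, _⟩ | ⟨h, _⟩
    · exact h
    · exact absurd hua h
    · exact absurd hua h
  · intro u _ hua v hv
    have := hfspec v
    rw [Set.mem_setOf_eq] at hv
    rw [hv] at this
    rcases this with ⟨h, _⟩ | ⟨_, h⟩ | ⟨_, h, _⟩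
    · exact absurd h hua
    · exact Or.inl h.symm
    · exact Or.inr h
  · intro u huU w _ hua hwa _
    ext v
    simp only [Set.mem_inter_iff, SimpleGraph.mem_neighborSet, Set.mem_setOf_eq,
      Set.mem_empty_iff_false, iff_false, not_and]
    intro hadj hfv
    obtain ⟨huv, hwv⟩ := hadj
    have := hfspec v
    rw [hfv] at this
    rcases this with ⟨h, _⟩ | ⟨_, h⟩ | ⟨_, _, h⟩
    · exact hwa h
    · exact G.loopless.irrefl v (h ▸ hwv)
    · exact h u huU hua huv
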